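/- arXiv:2405.15391 — 2 statements merged into one kernel-verified Lean document; each statement's English description precedes it below -/
import Mathlib

section
/- Let g, g' ∈ Aut(T), let π, π' be their restrictions to the set V_T of first-level vertices, and let U_g be a set of representatives of the ⟨π⟩-orbits on the internal first-level vertices. Then g and g' are conjugate in Aut(T) if and only if: (a) there exists σ ∈ Aut(T)|_{V_T} (the set of restrictions to V_T of elements of Aut(T)) with π' = σ ∘ π ∘ σ⁻¹, and (b) for every v ∈ U_g there exists a rooted tree isomorphism t_v: T_v → T_{σ(v)} such that [(g')^ℓ]_{σ(v)} = t_v ∘ [g^ℓ]_v ∘ t_v⁻¹, where ℓ is the length of the ⟨π⟩-orbit of v. -/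
open Function

structure FRTree : Type 1 where
  V : Type
  [fintypeV : Fintype V]
  [decEqV : DecidableEq V]
  root : V
  parent : V → V
  parent_root : parent root = root
  reaches_root : ∀ v : V, ∃ n : ℕ, parent^[n] v = root

attribute [instance] FRTree.fintypeV FRTree.decEqV

namespace FRTree

/-- `w` is a child of `u`. -/
def IsChild (T : FRTree) (w u : T.V) : Prop := w ≠ T.root ∧ T.parent w = u

instance (T : FRTree) (w u : T.V) : Decidable (T.IsChild w u) :=
  inferInstanceAs (Decidable (w ≠ T.root ∧ T.parent w = u))

/-- A vertex is internal if it has at least one child. -/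
def Internal (T : FRTree) (u : T.V) : Prop := ∃ w, T.IsChild w u

/-- A leaf is a vertex without children. -/
def IsLeaf (T : FRTree) (u : T.V) : Prop := ¬ T.Internal u

/-- Two (non-root) vertices are siblings if they have the same parent. -/
def Siblings (T : FRTree) (u v : T.V) : Prop :=
  u ≠ T.root ∧ v ≠ T.root ∧ T.parent u = T.parent v

/-- The set of vertices of the subtree `T_u`:  `u` together with all of its descendants. -/
def Desc (T : FRTree) (u : T.V) : Set T.V := {v | ∃ n : ℕ, T.parent^[n] v = u}

/-- First level vertices. -/
def FirstLevel (T : FRTree) (v : T.V) : Prop := v ≠ T.root ∧ T.parent v = T.root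

/-- The children of a vertex, as a finset. -/
def children (T : FRTree) (u : T.V) : Finset T.V :=
  Finset.univ.filter (fun w => T.IsChild w u)

end FRTree

open FRTree

/-- Rooted tree homomorphism: sends root to root, non-root vertices to non-root
vertices and commutes with taking the parent.  (This is the same as a graph
homomorphism between the underlying trees sending root to root.) -/
def IsHom (T P : FRTree) (φ : T.V → P.V) : Prop :=
  φ T.root = P.root ∧
  ∀ v : T.V, v ≠ T.root → φ v ≠ P.root ∧ P.parent (φ v) = φ (T.parent v)

/-- Isomorphism of rooted trees. -/
def IsIsom (T P : FRTree) (φ : T.V → P.V) : Prop :=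
  IsHom T P φ ∧ Function.Bijective φ

/-- The automorphism group of a rooted tree, as a subgroup of the permutations of the vertices. -/
def FRTree.Aut (T : FRTree) : Subgroup (Equiv.Perm T.V) where
  carrier := {g : Equiv.Perm T.V | IsHom T T ⇑g}
  one_mem' := ⟨rfl, fun v hv => ⟨hv, rfl⟩⟩
  mul_mem' := by
    rintro a b ⟨ha0, ha⟩ ⟨hb0, hb⟩
    refine ⟨?_, fun v hv => ?_⟩
    · simp only [Equiv.Perm.coe_mul, Function.comp_apply, hb0, ha0]
    · obtain ⟨hb1, hb2⟩ := hb v hv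
      obtain ⟨ha1, ha2⟩ := ha (b v) hb1
      refine ⟨by simpa using ha1, ?_⟩
      simp only [Equiv.Perm.coe_mul, Function.comp_apply]
      rw [ha2, hb2]
  inv_mem' := by
    rintro a ⟨ha0, ha⟩
    refine ⟨a.injective (by simp [ha0]), fun v hv => ?_⟩
    have h1 : a⁻¹ v ≠ T.root := by
      intro h
      apply hv
      have h2 := congrArg a h
      rwa [← Equiv.Perm.mul_apply, mul_inv_cancel, Equiv.Perm.one_apply, ha0] at h2
    obtain ⟨_, h3⟩ := ha (a⁻¹ v) h1
    rw [← Equiv.Perm.mul_apply, mul_inv_cancel, Equiv.Perm.one_apply] at h3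
    exact ⟨h1, a.injective (by rw [← h3, ← Equiv.Perm.mul_apply, mul_inv_cancel, Equiv.Perm.one_apply])⟩

/-- `τ` restricts to an isomorphism from the subtree `T_u` onto the subtree `T'_{u'}`.
(The values of `τ` outside of `T_u` are irrelevant.) -/
def IsSubtreeIso (T T' : FRTree) (u : T.V) (u' : T'.V) (τ : T.V → T'.V) : Prop :=
  τ u = u' ∧ Set.BijOn τ (T.Desc u) (T'.Desc u') ∧
  ∀ w ∈ T.Desc u, w ≠ u → τ w ≠ u' ∧ T'.parent (τ w) = τ (T.parent w)

/-- A tree composition (`P`-composition of `T`): a surjective rooted tree homomorphism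
satisfying the regularity condition. -/
def IsComposition (T P : FRTree) (φ : T.V → P.V) : Prop :=
  IsHom T P φ ∧ Function.Surjective φ ∧
  ∀ u v : T.V, u ≠ v → T.Internal u → T.Internal v → T.Siblings u v → φ u = φ v →
    ∃ g ∈ T.Aut, g u = v ∧ ∀ w ∈ T.Desc u, φ (g w) = φ w
/-- Equivalence of the restrictions `φ_u : T_u → P_{φ u}` and `ψ_{u'} : T'_{u'} → P'_{ψ u'}`
of two tree compositions. -/
def RestrEquiv (T P T' P' : FRTree) (φ : T.V → P.V) (ψ : T'.V → P'.V)
    (u : T.V) (u' : T'.V) : Prop :=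
  ∃ (τ : T.V → T'.V) (ω : P.V → P'.V),
    IsSubtreeIso T T' u u' τ ∧ IsSubtreeIso P P' (φ u) (ψ u') ω ∧
    ∀ w ∈ T.Desc u, ω (φ w) = ψ (τ w)

/-- Strict equivalence of the restrictions `δ_u : T_u → Q_{δ u}` and
`δ'_{u'} : T'_{u'} → Q_{δ' u'}` of two maps into the same tree `Q`
(the isomorphism on the target side is the identity). -/
def RestrStrictEquiv (T Q T' : FRTree) (δ : T.V → Q.V) (δ' : T'.V → Q.V)
    (u : T.V) (u' : T'.V) : Prop :=
  δ u = δ' u' ∧ ∃ τ : T.V → T'.V, IsSubtreeIso T T' u u' τ ∧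
    ∀ w ∈ T.Desc u, δ' (τ w) = δ w

/-- Equivalence of tree compositions. -/
def CompEquiv (T P T' P' : FRTree) (φ : T.V → P.V) (ψ : T'.V → P'.V) : Prop :=
  ∃ (τ : T.V → T'.V) (ω : P.V → P'.V),
    IsIsom T T' τ ∧ IsIsom P P' ω ∧ ω ∘ φ = ψ ∘ τ

/-- Strict equivalence of tree compositions with the same target tree. -/
def StrictEquiv (T T' P : FRTree) (φ : T.V → P.V) (ψ : T'.V → P.V) : Prop :=
  ∃ τ : T.V → T'.V, IsIsom T T' τ ∧ ψ ∘ τ = φ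

/-- `α : P → Q` is the quotient of the tree composition `φ : T → P`. -/
def IsQuotient (T P Q : FRTree) (φ : T.V → P.V) (α : P.V → Q.V) : Prop :=
  IsComposition P Q α ∧
  -- (a) for every internal `x ∈ P`, all children of `x` which are leaves are sent by `α`
  -- to a single vertex, which is the unique child of `α x` that is a leaf
  (∀ x : P.V, P.Internal x → ∀ y y' : P.V, P.IsChild y x → P.IsLeaf y →
    P.IsChild y' x → P.IsLeaf y' → α y = α y') ∧
  (∀ x y : P.V, P.Internal x → P.IsChild y x → P.IsLeaf y →
    Q.IsChild (α y) (α x) ∧ Q.IsLeaf (α y) ∧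
      ∀ z : Q.V, Q.IsChild z (α x) → Q.IsLeaf z → z = α y) ∧
  -- (b) distinct internal siblings of `Q` separate inequivalent restrictions of `φ`
  (∀ a b : Q.V, a ≠ b → Q.Internal a → Q.Internal b → Q.Siblings a b →
    ∀ u v : T.V, α (φ u) = a → α (φ v) = b → ¬ RestrEquiv T P T P φ φ u v) ∧
  -- (c) vertices with the same image under `α ∘ φ` have equivalent restrictions of `φ`,
  -- and strictly equivalent restrictions of `α ∘ φ`
  (∀ u w : T.V, T.Internal u → T.Internal w → α (φ u) = α (φ w) →
    RestrEquiv T P T P φ φ u w ∧ RestrStrictEquiv T Q T (α ∘ φ) (α ∘ φ) u w)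

/-- The type `|φ⁻¹|` of a tree composition: `|φ⁻¹|(root) = 0` and, for `y` non-root with
parent `x`, `|φ⁻¹|(y) = |φ⁻¹(y) ∩ Ch(u)|` where `u` is any vertex with `φ u = x` (for a tree
composition this number does not depend on the choice of `u`, so it equals the `sSup` below). -/
noncomputable def typeOf (T P : FRTree) (φ : T.V → P.V) (y : P.V) : ℕ :=
  if y = P.root then 0
  else sSup {n : ℕ | ∃ u : T.V, φ u = P.parent y ∧
    n = (Finset.univ.filter (fun w => T.IsChild w u ∧ φ w = y)).card}

/-- The partition `λ^b` associated to a non-root vertex `b` of the quotient tree: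
the multiset of the numbers `|φ⁻¹|(y)`, for `y` ranging over the children of `x`
with `α y = b` (where `x` is any vertex of `P` with `α x = ` parent of `b`). -/
noncomputable def assocPartition (T P Q : FRTree) (φ : T.V → P.V) (α : P.V → Q.V)
    (x : P.V) (b : Q.V) : Multiset ℕ :=
  ((Finset.univ.filter (fun y => P.IsChild y x ∧ α y = b)).val).map (typeOf T P φ)

/-- `Λ` is the partitional labeling of the quotient tree `Q` associated to the tree
composition `φ : T → P` (with quotient map `α : P → Q`). -/
def IsAssocLabeling (T P Q : FRTree) (φ : T.V → P.V) (α : P.V → Q.V)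
    (Λ : Q.V → Multiset ℕ) : Prop :=
  IsQuotient T P Q φ α ∧
  ∀ b : Q.V, b ≠ Q.root → ∀ x : P.V, α x = Q.parent b →
    Λ b = assocPartition T P Q φ α x b

/-- A partitional labeling: every non-root vertex is labeled by an integer partition
(a multiset of positive integers). -/
def IsPartitionalLabeling (Q : FRTree) (Λ : Q.V → Multiset ℕ) : Prop :=
  ∀ a : Q.V, a ≠ Q.root → ∀ n ∈ Λ a, 0 < n

/-- Isomorphism of the restrictions of two partitional labelings to the subtrees `Q_a` and
`Q'_b`, the roots `a`, `b` being regarded as unlabeled. -/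
def LabelRestrIso (Q Q' : FRTree) (Λ : Q.V → Multiset ℕ) (Ξ : Q'.V → Multiset ℕ)
    (a : Q.V) (b : Q'.V) : Prop :=
  ∃ γ : Q.V → Q'.V, IsSubtreeIso Q Q' a b γ ∧
    ∀ c ∈ Q.Desc a, c ≠ a → Λ c = Ξ (γ c)

/-- A tree of partitions. -/
def IsTreeOfPartitions (Q : FRTree) (Λ : Q.V → Multiset ℕ) : Prop :=
  IsPartitionalLabeling Q Λ ∧
  (∀ x y y' : Q.V, Q.IsChild y x → Q.IsLeaf y → Q.IsChild y' x → Q.IsLeaf y' → y = y') ∧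
  (∀ a b : Q.V, a ≠ b → Q.Internal a → Q.Internal b → Q.Siblings a b →
    ¬ LabelRestrIso Q Q Λ Λ a b)

/-- Isomorphism of partitional labelings. -/
def LabelIso (Q Q' : FRTree) (Λ : Q.V → Multiset ℕ) (Ξ : Q'.V → Multiset ℕ) : Prop :=
  ∃ γ : Q.V → Q'.V, IsIsom Q Q' γ ∧ ∀ a : Q.V, a ≠ Q.root → Λ a = Ξ (γ a)

/-- `δ : T → Q` is a realization of the tree of partitions `(Λ, Q)` as a tree of
partitions of `T`. -/
def IsRealization (T Q : FRTree) (Λ : Q.V → Multiset ℕ) (δ : T.V → Q.V) : Prop :=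
  IsComposition T Q δ ∧
  ∀ a : Q.V, Q.Internal a → ∀ u : T.V, δ u = a →
    ∑ b ∈ Q.children a, (Λ b).sum = (T.children u).card

/-- `(Λ, Q)` belongs to `Par(T)`. -/
def InParT (T Q : FRTree) (Λ : Q.V → Multiset ℕ) : Prop :=
  IsTreeOfPartitions Q Λ ∧ ∃ δ : T.V → Q.V, IsRealization T Q Λ δ

/-- The compatibility condition on `α : P → Q` entering the definition of `Par(T, P)`:
at every vertex of `α⁻¹(a)` the numbers of children is the sum of the lengths of the
partitions labeling the children of `a`. -/
def LengthCond (P Q : FRTree) (Λ : Q.V → Multiset ℕ) (α : P.V → Q.V) : Prop :=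
  ∀ a : Q.V, Q.Internal a → ∀ x : P.V, α x = a →
    ∑ b ∈ Q.children a, Multiset.card (Λ b) = (P.children x).card

/-- `(Λ, Q)` belongs to `Par(T, P)`. -/
def InParTP (T P Q : FRTree) (Λ : Q.V → Multiset ℕ) : Prop :=
  InParT T Q Λ ∧ ∃ α : P.V → Q.V, IsComposition P Q α ∧ LengthCond P Q Λ α
/-- A common refinement of the tree compositions `φ : T → P` and `ψ : T → M`. -/
def IsCommonRefinement (T P M R : FRTree) (φ : T.V → P.V) (ψ : T.V → M.V)
    (ρ : T.V → R.V) (ϑ : R.V → P.V) (τ : R.V → M.V) : Prop :=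
  IsComposition T R ρ ∧ IsComposition R P ϑ ∧ IsComposition R M τ ∧
  ϑ ∘ ρ = φ ∧ τ ∘ ρ = ψ

/-- Equivalence of the restricted common refinements `ρ_u` (of `(φ_u, ψ_u)`) and
`ρ_v` (of `(φ_v, ψ_v)`), where `ρ u = a`, `ρ v = b`, `ϑ a = ϑ b` and `τ a = τ b`. -/
def RestrRefEquiv (T P M R : FRTree) (φ : T.V → P.V) (ψ : T.V → M.V)
    (ρ : T.V → R.V) (ϑ : R.V → P.V) (τ : R.V → M.V)
    (u v : T.V) (a b : R.V) : Prop :=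
  ∃ (ζ : T.V → T.V) (γ : R.V → R.V),
    IsSubtreeIso T T u v ζ ∧ IsSubtreeIso R R a b γ ∧
    (∀ w ∈ T.Desc u, φ (ζ w) = φ w) ∧
    (∀ w ∈ T.Desc u, ψ (ζ w) = ψ w) ∧
    (∀ w ∈ T.Desc u, ρ (ζ w) = γ (ρ w)) ∧
    (∀ r ∈ R.Desc a, ϑ (γ r) = ϑ r) ∧
    (∀ r ∈ R.Desc a, τ (γ r) = τ r)

/-- The coarseness condition for a common refinement. -/
def Coarseness (T P M R : FRTree) (φ : T.V → P.V) (ψ : T.V → M.V)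
    (ρ : T.V → R.V) (ϑ : R.V → P.V) (τ : R.V → M.V) : Prop :=
  (∀ a b : R.V, a ≠ b → R.Internal a → R.Internal b → R.Siblings a b →
    ϑ a = ϑ b → τ a = τ b →
    ∀ u v : T.V, ρ u = a → ρ v = b →
      ¬ RestrRefEquiv T P M R φ ψ ρ ϑ τ u v a b) ∧
  (∀ a b : R.V, a ≠ b → R.IsLeaf a → R.IsLeaf b → R.Siblings a b →
    ¬ (ϑ a = ϑ b ∧ τ a = τ b))

/-- Equivalence of two common refinements of the same couple `(φ, ψ)` of tree
compositions of `T`. -/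
def RefEquiv (T P M R R' : FRTree) (φ : T.V → P.V) (ψ : T.V → M.V)
    (ρ : T.V → R.V) (ϑ : R.V → P.V) (τ : R.V → M.V)
    (ρ' : T.V → R'.V) (ϑ' : R'.V → P.V) (τ' : R'.V → M.V) : Prop :=
  ∃ (ζ : T.V → T.V) (γ : R.V → R'.V),
    IsIsom T T ζ ∧ IsIsom R R' γ ∧
    φ ∘ ζ = φ ∧ ψ ∘ ζ = ψ ∧ ρ' ∘ ζ = γ ∘ ρ ∧ ϑ' ∘ γ = ϑ ∧ τ' ∘ γ = τ

/-- The orbit of the tree composition `φ` under the action `g • φ = φ ∘ g⁻¹` of `Aut T`. -/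
def OrbitSet (T P : FRTree) (φ : T.V → P.V) : Type :=
  {ψ : T.V → P.V // ∃ g ∈ T.Aut, ψ = φ ∘ ⇑g⁻¹}

/-- The action of `Aut T` on the orbit of `φ`. -/
def orbAct (T P : FRTree) (φ : T.V → P.V) (g : T.Aut)
    (ψ : OrbitSet T P φ) : OrbitSet T P φ :=
  ⟨ψ.1 ∘ ⇑((g : Equiv.Perm T.V))⁻¹, by
    obtain ⟨h, hh, hψ⟩ := ψ.2
    refine ⟨(g : Equiv.Perm T.V) * h, mul_mem g.2 hh, ?_⟩
    rw [hψ]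
    funext x
    simp [Function.comp, mul_inv_rev]⟩

/-- The permutation representation `M^{|φ⁻¹|}` of `Aut T` on the (complex functions on
the) orbit of the tree composition `φ`. -/
noncomputable def permRep (T P : FRTree) (φ : T.V → P.V) :
    Representation ℂ (T.Aut) (OrbitSet T P φ → ℂ) where
  toFun g :=
    { toFun := fun F ψ => F (orbAct T P φ g⁻¹ ψ)
      map_add' := fun _ _ => rfl
      map_smul' := fun _ _ => rfl }
  map_one' := by
    refine LinearMap.ext fun F => funext fun ψ => ?_
    show F (orbAct T P φ 1⁻¹ ψ) = F ψ
    have h : orbAct T P φ 1⁻¹ ψ = ψ := Subtype.ext (funext fun x => by simp [orbAct])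
    rw [h]
  map_mul' := by
    intro a b
    refine LinearMap.ext fun F => funext fun ψ => ?_
    show F (orbAct T P φ (a * b)⁻¹ ψ) = F (orbAct T P φ b⁻¹ (orbAct T P φ a⁻¹ ψ))
    have h : orbAct T P φ (a * b)⁻¹ ψ = orbAct T P φ b⁻¹ (orbAct T P φ a⁻¹ ψ) :=
      Subtype.ext (funext fun x => by simp [orbAct, mul_inv_rev])
    rw [h]

/-- Equivalence of two representations. -/
def RepEquiv {G : Type*} [Group G] {V W : Type*}
    [AddCommGroup V] [Module ℂ V] [AddCommGroup W] [Module ℂ W]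
    (ρ : Representation ℂ G V) (σ : Representation ℂ G W) : Prop :=
  ∃ e : V ≃ₗ[ℂ] W, ∀ (g : G) (v : V), e (ρ g v) = σ g (e v)

/-- Irreducibility of a representation. -/
def IsIrreducibleRep {G V : Type*} [Group G] [AddCommGroup V] [Module ℂ V]
    (ρ : Representation ℂ G V) : Prop :=
  (∃ v : V, v ≠ 0) ∧
  ∀ U : Submodule ℂ V, (∀ g : G, ∀ v ∈ U, ρ g v ∈ U) → U = ⊥ ∨ U = ⊤

/-- The space of equivariant linear maps between two representations; when `ρ` is
irreducible, its dimension is the multiplicity of `ρ` in `σ`. -/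
def equivariantHoms {G : Type*} [Group G] {V W : Type*}
    [AddCommGroup V] [Module ℂ V] [AddCommGroup W] [Module ℂ W]
    (ρ : Representation ℂ G V) (σ : Representation ℂ G W) :
    Submodule ℂ (V →ₗ[ℂ] W) where
  carrier := {f | ∀ (g : G) (v : V), f (ρ g v) = σ g (f v)}
  add_mem' := by
    intro a b ha hb g v
    simp [ha g v, hb g v]
  zero_mem' := by intro g v; simp
  smul_mem' := by
    intro c f hf g v
    simp [hf g v]

/-- The stabilizer `K_φ` of a tree composition `φ` in `Aut T`. -/
def stab (T P : FRTree) (φ : T.V → P.V) : Subgroup (T.Aut) where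
  carrier := {g | ∀ x : T.V, φ ((g : Equiv.Perm T.V) x) = φ x}
  one_mem' := fun _ => rfl
  mul_mem' := by
    intro a b ha hb x
    simp only [Subgroup.coe_mul, Equiv.Perm.mul_apply]
    rw [ha ((b : Equiv.Perm T.V) x), hb x]
  inv_mem' := by
    intro a ha x
    have := ha (((a : Equiv.Perm T.V))⁻¹ x)
    simp only [Equiv.Perm.coe_inv, Equiv.apply_symm_apply] at this
    simpa using this.symm

/-- The space of the representation of `G` induced by the character `χ` of the
subgroup `K`: complex functions on `G` which are `χ`-covariant for right translation
by `K`; `G` acts by left translation. -/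
noncomputable def IndSpace (G : Type*) [Group G] (K : Subgroup G) (χ : K →* ℂ) :
    Submodule ℂ (G → ℂ) where
  carrier := {f | ∀ (g : G) (k : K), f (g * k) = χ k * f g}
  add_mem' := by
    intro a b ha hb g k
    simp only [Pi.add_apply, ha g k, hb g k]
    ring
  zero_mem' := by intro g k; simp
  smul_mem' := by
    intro c f hf g k
    simp only [Pi.smul_apply, smul_eq_mul, hf g k]
    ring

/-- The representation of `G` induced by the character `χ` of the subgroup `K`. -/
noncomputable def indRep (G : Type*) [Group G] (K : Subgroup G) (χ : K →* ℂ) :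
    Representation ℂ G (IndSpace G K χ) where
  toFun g :=
    { toFun := fun f => ⟨fun x => (f : G → ℂ) (g⁻¹ * x), by
        intro x k
        have h := f.2 (g⁻¹ * x) k
        simpa [mul_assoc] using h⟩
      map_add' := by intro a b; apply Subtype.ext; funext x; rfl
      map_smul' := by intro c a; apply Subtype.ext; funext x; rfl }
  map_one' := by
    refine LinearMap.ext fun f => Subtype.ext (funext fun x => ?_)
    simp
  map_mul' := by
    intro a b
    refine LinearMap.ext fun f => Subtype.ext (funext fun x => ?_)
    simp [mul_assoc]

/-- A sibling swap: an automorphism of order two exchanging the subtrees rooted at two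
distinct siblings `u`, `v` and fixing everything else.  The sign representation of
`Aut T` is the unique homomorphism `Aut T →* ℂ` taking the value `-1` at every
sibling swap. -/
def IsSiblingSwap (T : FRTree) (g : Equiv.Perm T.V) : Prop :=
  ∃ u v : T.V, u ≠ v ∧ T.Siblings u v ∧ g u = v ∧
    (∀ w : T.V, w ∉ T.Desc u → w ∉ T.Desc v → g w = w) ∧ g * g = 1

/-- The conjugate (transpose) of an integer partition, encoded as a multiset. -/
def conjP (m : Multiset ℕ) : Multiset ℕ :=
  ((Multiset.range m.sum).map fun i => Multiset.card (m.filter fun p => i < p)).filter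
    fun n => 0 < n

/-- Two tree compositions of the same tree have `0-1` intersection. -/
def ZeroOneIntersection (T P M : FRTree) (φ : T.V → P.V) (ψ : T.V → M.V) : Prop :=
  ∀ v : T.V, T.Internal v → ∀ x : P.V, ∀ y : M.V,
    P.IsChild x (φ v) → M.IsChild y (ψ v) →
    {w : T.V | φ w = x ∧ ψ w = y}.Subsingleton

/-- `φᵗ : T → Pᵗ` (with quotient `αᵗ`) is a transpose of the tree composition
`φ : T → P` with quotient `α : P → Q` and associated tree of partitions `Λ`. -/
def IsTranspose (T P Q Pt : FRTree) (φ : T.V → P.V) (α : P.V → Q.V)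
    (Λ : Q.V → Multiset ℕ) (φt : T.V → Pt.V) (αt : Pt.V → Q.V) : Prop :=
  IsComposition T Pt φt ∧
  IsAssocLabeling T Pt Q φt αt (fun a => conjP (Λ a)) ∧
  (αt ∘ φt = α ∘ φ) ∧
  ZeroOneIntersection T P Pt φ φt

set_option synthInstance.maxHeartbeats 400000 in
/-- The multiplicity of the irreducible representation `ρ` inside `σ`: the dimension of
the space of equivariant linear maps. -/
noncomputable def repMultiplicity {G : Type*} [Group G] {V W : Type*}
    [AddCommGroup V] [Module ℂ V] [AddCommGroup W] [Module ℂ W]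
    (ρ : Representation ℂ G V) (σ : Representation ℂ G W) : ℕ :=
  Module.finrank ℂ ↥(equivariantHoms ρ σ)
theorem Equiv.Perm.apply_inv_self {α : Type*} (f : Equiv.Perm α) (x : α) : f (f⁻¹ x) = x :=
  f.apply_symm_apply x

theorem Equiv.Perm.inv_apply_self {α : Type*} (f : Equiv.Perm α) (x : α) : f⁻¹ (f x) = x :=
  f.symm_apply_apply x

section ConjHelpers

variable {T : FRTree} {g : Equiv.Perm T.V}

lemma aut_root (hg : g ∈ T.Aut) : g T.root = T.root := hg.1

lemma aut_ne_root (hg : g ∈ T.Aut) {v : T.V} (hv : v ≠ T.root) : g v ≠ T.root :=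
  (hg.2 v hv).1

lemma aut_parent (hg : g ∈ T.Aut) (v : T.V) : T.parent (g v) = g (T.parent v) := by
  by_cases h : v = T.root
  · subst h; rw [aut_root hg, T.parent_root]; rw [aut_root hg]
  · exact (hg.2 v h).2

lemma aut_iterate_parent (hg : g ∈ T.Aut) (n : ℕ) (v : T.V) :
    T.parent^[n] (g v) = g (T.parent^[n] v) := by
  induction n with
  | zero => rfl
  | succ k ih => rw [Function.iterate_succ_apply', ih, aut_parent hg,
      Function.iterate_succ_apply']

lemma aut_desc (hg : g ∈ T.Aut) {u x : T.V} (hx : x ∈ T.Desc u) :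
    g x ∈ T.Desc (g u) := by
  obtain ⟨n, hn⟩ := hx
  exact ⟨n, by rw [aut_iterate_parent hg, hn]⟩

lemma iterate_parent_root (T : FRTree) (n : ℕ) : T.parent^[n] T.root = T.root :=
  Function.iterate_fixed T.parent_root n

lemma root_not_mem_desc {u : T.V} (hu : u ≠ T.root) : T.root ∉ T.Desc u := by
  rintro ⟨n, hn⟩
  exact hu (by rw [← hn, iterate_parent_root])

lemma desc_ne_root {u x : T.V} (hu : u ≠ T.root) (hx : x ∈ T.Desc u) : x ≠ T.root := by
  rintro rfl
  exact root_not_mem_desc hu hx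

lemma mem_desc_self (T : FRTree) (u : T.V) : u ∈ T.Desc u := ⟨0, rfl⟩

lemma aut_bijOn (hg : g ∈ T.Aut) (u : T.V) :
    Set.BijOn (⇑g) (T.Desc u) (T.Desc (g u)) := by
  refine ⟨fun x hx => aut_desc hg hx, fun x _ y _ h => g.injective h, fun y hy => ?_⟩
  refine ⟨g⁻¹ y, ?_, by simp⟩
  have := aut_desc (inv_mem hg) hy
  simpa using this

lemma aut_firstLevel (hg : g ∈ T.Aut) {v : T.V} (hv : T.FirstLevel v) :
    T.FirstLevel (g v) :=
  ⟨aut_ne_root hg hv.1, by rw [aut_parent hg, hv.2, aut_root hg]⟩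

lemma aut_internal (hg : g ∈ T.Aut) {u : T.V} (hu : T.Internal u) :
    T.Internal (g u) := by
  obtain ⟨w, hw1, hw2⟩ := hu
  exact ⟨g w, aut_ne_root hg hw1, by rw [aut_parent hg, hw2]⟩

/-- The first-level ancestor of a vertex. -/
noncomputable def fla (T : FRTree) (x : T.V) : T.V :=
  T.parent^[Nat.find (T.reaches_root x) - 1] x

lemma fla_spec {w x : T.V} (hw : T.FirstLevel w) (hx : x ∈ T.Desc w) :
    x ≠ T.root ∧ fla T x = w := by
  obtain ⟨a, ha⟩ := hx
  have hxr : x ≠ T.root := by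
    rintro rfl
    exact hw.1 (by rw [← ha, iterate_parent_root])
  have h1 : T.parent^[a + 1] x = T.root := by
    rw [Function.iterate_succ_apply', ha, hw.2]
  have h3 : Nat.find (T.reaches_root x) ≤ a + 1 := Nat.find_le h1
  have h2 : a < Nat.find (T.reaches_root x) := by
    by_contra h
    push_neg at h
    have : T.parent^[a] x = T.root := by
      obtain ⟨b, rfl⟩ := Nat.exists_eq_add_of_le h
      rw [Nat.add_comm, Function.iterate_add_apply, Nat.find_spec (T.reaches_root x),
        iterate_parent_root]
    exact hw.1 (by rw [← ha, this])
  have : Nat.find (T.reaches_root x) = a + 1 := le_antisymm h3 h2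
  exact ⟨hxr, by rw [fla, this, Nat.add_sub_cancel, ha]⟩

lemma fla_exists {x : T.V} (hx : x ≠ T.root) :
    T.FirstLevel (fla T x) ∧ x ∈ T.Desc (fla T x) := by
  have hpos : 0 < Nat.find (T.reaches_root x) := by
    rcases Nat.eq_zero_or_pos (Nat.find (T.reaches_root x)) with h | h
    · exact absurd (by have := Nat.find_spec (T.reaches_root x); rwa [h] at this) hx
    · exact h
  set m := Nat.find (T.reaches_root x) - 1 with hm
  have hms : m + 1 = Nat.find (T.reaches_root x) := Nat.succ_pred_eq_of_pos hpos
  have h1 : T.parent (fla T x) = T.root := by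
    show T.parent (T.parent^[m] x) = T.root
    have h := Function.iterate_succ_apply' T.parent m x
    rw [← h, show m.succ = Nat.find (T.reaches_root x) from hms]
    exact Nat.find_spec (T.reaches_root x)
  have h2 : fla T x ≠ T.root := by
    have := Nat.find_min (T.reaches_root x) (m := m) (by omega)
    exact this
  exact ⟨⟨h2, h1⟩, ⟨m, rfl⟩⟩

lemma fla_firstLevel_self {w : T.V} (hw : T.FirstLevel w) : fla T w = w :=
  (fla_spec hw (mem_desc_self T w)).2

lemma parent_mem_desc {w x : T.V} (hx : x ∈ T.Desc w) (hxw : x ≠ w) :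
    T.parent x ∈ T.Desc w := by
  obtain ⟨k, hk⟩ := hx
  cases k with
  | zero => exact absurd hk hxw
  | succ m => exact ⟨m, by rw [← Function.iterate_succ_apply, hk]⟩

lemma parent_ne_root_of_desc {w x : T.V} (hw : T.FirstLevel w) (hx : x ∈ T.Desc w)
    (hxw : x ≠ w) : T.parent x ≠ T.root := by
  intro h
  obtain ⟨m, hm⟩ := parent_mem_desc hx hxw
  rw [h, iterate_parent_root] at hm
  exact hw.1 hm.symm

lemma desc_leaf {w : T.V} (hw : T.FirstLevel w) (hl : ¬ T.Internal w)
    {x : T.V} (hx : x ∈ T.Desc w) : x = w := by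
  obtain ⟨k, hk⟩ := hx
  induction k generalizing x with
  | zero => exact hk
  | succ m ih =>
    have hk' : T.parent^[m] (T.parent x) = w := by
      rw [← Function.iterate_succ_apply]; exact hk
    have hpx : T.parent x = w := ih hk'
    by_cases hxr : x = T.root
    · subst hxr; rw [T.parent_root] at hpx; exact absurd hpx.symm hw.1
    · exact absurd ⟨x, hxr, hpx⟩ hl

end ConjHelpers

/-- **Lemma (conjugacy criterion).**  `g` and `g'` are conjugate in `Aut T` if and only
if their restrictions to the first level are conjugate by the restriction `σ` of some
automorphism `s` and, for every representative `v` of the `⟨π⟩`-orbits on the internal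
first-level vertices, the automorphisms `[g^ℓ]_v` of `T_v` and `[(g')^ℓ]_{σ v}` of
`T_{σ v}` are conjugate by an isomorphism `T_v → T_{σ v}` (here `ℓ` is the length of
the orbit of `v`, i.e. the minimal period of `v` under `g`). -/
theorem conjugacy_criterion
    (T : FRTree) (g g' : Equiv.Perm T.V) (hg : g ∈ T.Aut) (hg' : g' ∈ T.Aut)
    (U : Set T.V)
    (hU1 : ∀ v ∈ U, T.FirstLevel v ∧ T.Internal v)
    (hU2 : ∀ w : T.V, T.FirstLevel w → T.Internal w → ∃ v ∈ U, ∃ n : ℕ, (g ^ n) v = w)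
    (hU3 : ∀ v ∈ U, ∀ v' ∈ U, (∃ n : ℕ, (g ^ n) v = v') → v = v') :
    (∃ t ∈ T.Aut, t * g * t⁻¹ = g') ↔
      ∃ s ∈ T.Aut,
        (∀ v : T.V, T.FirstLevel v → g' (s v) = s (g v)) ∧
        ∀ v ∈ U, ∃ τ : T.V → T.V, IsSubtreeIso T T v (s v) τ ∧
          ∀ w ∈ T.Desc v,
            τ ((g ^ Function.minimalPeriod (⇑g) v) w) =
              (g' ^ Function.minimalPeriod (⇑g) v) (τ w) := by
  constructor
  · rintro ⟨t, ht, hconj⟩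
    have hcomm : ∀ x, g' (t x) = t (g x) := by
      intro x
      rw [← hconj]
      simp [Equiv.Perm.mul_apply]
    refine ⟨t, ht, fun v _ => hcomm v, fun v hvU => ?_⟩
    obtain ⟨hvFL, hvInt⟩ := hU1 v hvU
    refine ⟨⇑t, ⟨rfl, aut_bijOn ht v, fun w hw hwv =>
      ⟨fun h => hwv (t.injective h), (ht.2 w (desc_ne_root hvFL.1 hw)).2⟩⟩, ?_⟩
    intro w hw
    have hp : g' ^ Function.minimalPeriod (⇑g) v
        = t * g ^ Function.minimalPeriod (⇑g) v * t⁻¹ := by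
      rw [← hconj, conj_pow]
    rw [hp]
    simp [Equiv.Perm.mul_apply]
  · rintro ⟨s, hs, hs2, hs3⟩
    classical
    choose v0 hv0U n0 hv0n using hU2
    choose τ0 hτ0 hτc0 using hs3
    set ℓ : T.V → ℕ := fun u => Function.minimalPeriod (⇑g) u with hℓ
    set Vc : T.V → T.V := fun w =>
      if h : T.FirstLevel w ∧ T.Internal w then v0 w h.1 h.2 else T.root with hVcdef
    set Nc : T.V → ℕ := fun w =>
      if h : T.FirstLevel w ∧ T.Internal w then n0 w h.1 h.2 else 0 with hNcdef
    have hVc : ∀ w, T.FirstLevel w → T.Internal w →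
        Vc w ∈ U ∧ (g ^ Nc w) (Vc w) = w := by
      intro w h1 h2
      simp only [hVcdef, hNcdef, dif_pos (show T.FirstLevel w ∧ T.Internal w from ⟨h1, h2⟩)]
      exact ⟨hv0U w h1 h2, hv0n w h1 h2⟩
    set τ : T.V → T.V → T.V := fun u => if h : u ∈ U then τ0 u h else id with hτdef
    have hτ : ∀ u, u ∈ U →
        IsSubtreeIso T T u (s u) (τ u) ∧
        ∀ x ∈ T.Desc u, τ u ((g ^ ℓ u) x) = (g' ^ ℓ u) (τ u x) := by
      intro u hu
      simp only [hτdef, dif_pos hu]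
      exact ⟨hτ0 u hu, hτc0 u hu⟩
    have hUFL : ∀ u ∈ U, T.FirstLevel u := fun u hu => (hU1 u hu).1
    have hper : ∀ u : T.V, (g ^ ℓ u) u = u := by
      intro u
      have := Function.iterate_minimalPeriod (f := ⇑g) (x := u)
      rwa [Equiv.Perm.iterate_eq_pow] at this
    -- iterating the period commutation
    have hD : ∀ u, u ∈ U → ∀ k : ℕ, ∀ z ∈ T.Desc u,
        (g ^ (k * ℓ u)) z ∈ T.Desc u ∧
        τ u ((g ^ (k * ℓ u)) z) = (g' ^ (k * ℓ u)) (τ u z) := by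
      intro u hu k
      induction k with
      | zero => intro z hz; exact ⟨by simpa using hz, by simp⟩
      | succ m ih =>
        intro z hz
        have hzl : (g ^ ℓ u) z ∈ T.Desc u := by
          have := aut_desc (pow_mem hg (ℓ u)) hz
          rwa [hper u] at this
        have h1 : (g ^ ((m + 1) * ℓ u)) z = (g ^ (m * ℓ u)) ((g ^ ℓ u) z) := by
          rw [add_mul, one_mul, pow_add, Equiv.Perm.mul_apply]
        obtain ⟨ih1, ih2⟩ := ih ((g ^ ℓ u) z) hzl
        refine ⟨by rw [h1]; exact ih1, ?_⟩
        rw [h1, ih2, (hτ u hu).2 z hz, ← Equiv.Perm.mul_apply, ← pow_add,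
          add_mul, one_mul]
    -- independence of the chosen exponent
    have hC : ∀ u, u ∈ U → ∀ a b : ℕ, (g ^ a) u = (g ^ b) u →
        ∀ y ∈ T.Desc ((g ^ a) u),
        (g' ^ a) (τ u ((g ^ a)⁻¹ y)) = (g' ^ b) (τ u ((g ^ b)⁻¹ y)) := by
      have key : ∀ u, u ∈ U → ∀ a b : ℕ, a ≤ b → (g ^ a) u = (g ^ b) u →
          ∀ y ∈ T.Desc ((g ^ a) u),
          (g' ^ a) (τ u ((g ^ a)⁻¹ y)) = (g' ^ b) (τ u ((g ^ b)⁻¹ y)) := by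
        intro u hu a b hab heq y hy
        have h1 : (g ^ a) ((g ^ (b - a)) u) = (g ^ a) u := by
          rw [← Equiv.Perm.mul_apply, ← pow_add, Nat.add_sub_cancel' hab]
          exact heq.symm
        have h2 : (g ^ (b - a)) u = u := (g ^ a).injective h1
        have h3 : ℓ u ∣ (b - a) := by
          refine Function.IsPeriodicPt.minimalPeriod_dvd ?_
          show (⇑g)^[b - a] u = u
          rw [Equiv.Perm.iterate_eq_pow]
          exact h2
        obtain ⟨k, hk⟩ := h3
        set z := (g ^ b)⁻¹ y with hz
        have hzd : z ∈ T.Desc u := by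
          have h4 : (g ^ b)⁻¹ y ∈ T.Desc ((g ^ b)⁻¹ ((g ^ a) u)) :=
            aut_desc (inv_mem (pow_mem hg b)) hy
          rw [heq, Equiv.Perm.inv_apply_self] at h4
          exact h4
        have hab' : a + k * ℓ u = b := by
          have : k * ℓ u = b - a := by rw [mul_comm, ← hk]
          omega
        have h4 : (g ^ a)⁻¹ y = (g ^ (k * ℓ u)) z := by
          apply (g ^ a).injective
          rw [Equiv.Perm.apply_inv_self, ← Equiv.Perm.mul_apply, ← pow_add, hab', hz,
            Equiv.Perm.apply_inv_self]
        rw [h4, (hD u hu k z hzd).2, ← Equiv.Perm.mul_apply, ← pow_add, hab']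
      intro u hu a b heq y hy
      rcases le_total a b with h | h
      · exact key u hu a b h heq y hy
      · exact (key u hu b a h heq.symm y (heq ▸ hy)).symm
    -- s commutes with powers of g on the first level
    have hsFL : ∀ p, T.FirstLevel p → ∀ m : ℕ, s ((g ^ m) p) = (g' ^ m) (s p) := by
      intro p hp m
      induction m with
      | zero => simp
      | succ k ih =>
        have hfl : T.FirstLevel ((g ^ k) p) := aut_firstLevel (pow_mem hg k) hp
        rw [pow_succ' g k, Equiv.Perm.mul_apply, ← hs2 _ hfl, ih,
          pow_succ' g' k, Equiv.Perm.mul_apply]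
    -- the conjugating map
    set f : T.V → T.V := fun x =>
      if x = T.root then T.root
      else if T.Internal (fla T x) then
        (g' ^ Nc (fla T x)) (τ (Vc (fla T x)) ((g ^ Nc (fla T x))⁻¹ x))
      else s x with hfdef
    have hfroot : f T.root = T.root := by simp [hfdef]
    have hfleaf : ∀ w, T.FirstLevel w → ¬ T.Internal w → ∀ x ∈ T.Desc w, f x = s x := by
      intro w hw hl x hx
      obtain ⟨hxr, hfl⟩ := fla_spec hw hx
      simp only [hfdef]
      rw [if_neg hxr, hfl, if_neg hl]
    have hfint : ∀ w, T.FirstLevel w → T.Internal w → ∀ x ∈ T.Desc w,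
        f x = (g' ^ Nc w) (τ (Vc w) ((g ^ Nc w)⁻¹ x)) := by
      intro w hw hi x hx
      obtain ⟨hxr, hfl⟩ := fla_spec hw hx
      simp only [hfdef]
      rw [if_neg hxr, hfl, if_pos hi]
    have hfFL : ∀ p, T.FirstLevel p → f p = s p := by
      intro p hp
      by_cases hi : T.Internal p
      · rw [hfint p hp hi p (mem_desc_self T p)]
        obtain ⟨huU, hgn⟩ := hVc p hp hi
        have h1 : (g ^ Nc p)⁻¹ p = Vc p := by
          apply (g ^ Nc p).injective
          rw [Equiv.Perm.apply_inv_self, hgn]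
        rw [h1, (hτ (Vc p) huU).1.1, ← hsFL (Vc p) (hUFL _ huU) (Nc p), hgn]
      · exact hfleaf p hp hi p (mem_desc_self T p)
    have hzdesc : ∀ w, T.FirstLevel w → T.Internal w → ∀ x ∈ T.Desc w,
        (g ^ Nc w)⁻¹ x ∈ T.Desc (Vc w) := by
      intro w hw hi x hx
      obtain ⟨huU, hgn⟩ := hVc w hw hi
      have := aut_desc (inv_mem (pow_mem hg (Nc w))) hx
      rwa [show (g ^ Nc w)⁻¹ w = Vc w from by
        apply (g ^ Nc w).injective
        rw [Equiv.Perm.apply_inv_self, hgn]] at this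
    have hfd : ∀ w, T.FirstLevel w → ∀ x ∈ T.Desc w, f x ∈ T.Desc (s w) := by
      intro w hw x hx
      by_cases hi : T.Internal w
      · rw [hfint w hw hi x hx]
        obtain ⟨huU, hgn⟩ := hVc w hw hi
        have hτz : τ (Vc w) ((g ^ Nc w)⁻¹ x) ∈ T.Desc (s (Vc w)) :=
          (hτ _ huU).1.2.1.mapsTo (hzdesc w hw hi x hx)
        have := aut_desc (pow_mem hg' (Nc w)) hτz
        rwa [← hsFL (Vc w) (hUFL _ huU) (Nc w), hgn] at this
      · rw [hfleaf w hw hi x hx, desc_leaf hw hi hx]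
        exact mem_desc_self T (s w)
    have hfla : ∀ x, x ≠ T.root → f x ≠ T.root ∧ fla T (f x) = s (fla T x) := by
      intro x hx
      obtain ⟨hwFL, hxd⟩ := fla_exists hx
      have hsw : T.FirstLevel (s (fla T x)) := aut_firstLevel hs hwFL
      have := hfd (fla T x) hwFL x hxd
      exact ⟨desc_ne_root hsw.1 this, (fla_spec hsw this).2⟩
    have hinj : Function.Injective f := by
      intro x y hxy
      by_cases hx : x = T.root
      · subst hx
        by_cases hy : y = T.root
        · exact hy.symm
        · exact absurd (hxy.symm.trans hfroot) (hfla y hy).1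
      · by_cases hy : y = T.root
        · exact absurd (hxy.trans (hy ▸ hfroot)) (hfla x hx).1
        · have h1 := hfla x hx
          have h2 := hfla y hy
          have hw : fla T x = fla T y := s.injective (by rw [← h1.2, ← h2.2, hxy])
          obtain ⟨hwFL, hxd⟩ := fla_exists hx
          obtain ⟨_, hyd⟩ := fla_exists hy
          rw [← hw] at hyd
          by_cases hi : T.Internal (fla T x)
          · obtain ⟨huU, hgn⟩ := hVc _ hwFL hi
            rw [hfint _ hwFL hi x hxd, hfint _ hwFL hi y hyd] at hxy
            have e1 := (g' ^ Nc (fla T x)).injective hxy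
            have e2 := (hτ _ huU).1.2.1.injOn (hzdesc _ hwFL hi x hxd)
              (hzdesc _ hwFL hi y hyd) e1
            exact ((g ^ Nc (fla T x))⁻¹).injective e2
          · rw [desc_leaf hwFL hi hxd, desc_leaf hwFL hi hyd]
    set t : Equiv.Perm T.V := Equiv.ofBijective f (Finite.injective_iff_bijective.mp hinj)
      with htdef
    have ht_apply : ∀ x, t x = f x := fun x => rfl
    have htAut : t ∈ T.Aut := by
      refine ⟨hfroot, fun x hx => ?_⟩
      refine ⟨(hfla x hx).1, ?_⟩
      show T.parent (f x) = f (T.parent x)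
      obtain ⟨hwFL, hxd⟩ := fla_exists hx
      by_cases hxw : x = fla T x
      · have hxFL : T.FirstLevel x := hxw ▸ hwFL
        rw [hfFL x hxFL, aut_parent hs, hxFL.2, aut_root hs, hfroot]
      · have hi : T.Internal (fla T x) := by
          by_contra hl
          exact hxw (desc_leaf hwFL hl hxd)
        have hpd : T.parent x ∈ T.Desc (fla T x) := parent_mem_desc hxd hxw
        obtain ⟨huU, hgn⟩ := hVc _ hwFL hi
        have hzx := hzdesc _ hwFL hi x hxd
        have hzne : (g ^ Nc (fla T x))⁻¹ x ≠ Vc (fla T x) := by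
          intro h
          apply hxw
          rw [← hgn, ← h, Equiv.Perm.apply_inv_self]
        rw [hfint _ hwFL hi x hxd, hfint _ hwFL hi (T.parent x) hpd,
          aut_parent (pow_mem hg' (Nc (fla T x)))]
        congr 1
        rw [((hτ _ huU).1.2.2 _ hzx hzne).2]
        congr 1
        rw [aut_parent (inv_mem (pow_mem hg (Nc (fla T x))))]
    have hcomm : ∀ x, f (g x) = g' (f x) := by
      intro x
      by_cases hx : x = T.root
      · subst hx
        rw [aut_root hg, hfroot]
        exact (aut_root hg').symm
      · obtain ⟨hwFL, hxd⟩ := fla_exists hx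
        have hgx : g x ∈ T.Desc (g (fla T x)) := aut_desc hg hxd
        have hgwFL : T.FirstLevel (g (fla T x)) := aut_firstLevel hg hwFL
        by_cases hi : T.Internal (fla T x)
        · have hgwi : T.Internal (g (fla T x)) := aut_internal hg hi
          obtain ⟨huU, hgn⟩ := hVc _ hwFL hi
          obtain ⟨hu'U, hgn'⟩ := hVc _ hgwFL hgwi
          have hK : 0 < orderOf g := orderOf_pos g
          have hb : (g ^ Nc (g (fla T x))) (Vc (g (fla T x)))
              = (g ^ (Nc (fla T x) + 1)) (Vc (fla T x)) := by
            rw [hgn', pow_succ', Equiv.Perm.mul_apply, hgn]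
          have hre : Vc (g (fla T x)) = Vc (fla T x) := by
            set B := Nc (g (fla T x)) with hB
            have hm : (g ^ (B * orderOf g - B + (Nc (fla T x) + 1))) (Vc (fla T x))
                = Vc (g (fla T x)) := by
              rw [pow_add, Equiv.Perm.mul_apply, ← hb, ← Equiv.Perm.mul_apply, ← pow_add]
              have hle : B ≤ B * orderOf g := Nat.le_mul_of_pos_right B hK
              rw [show B * orderOf g - B + B = B * orderOf g by omega]
              rw [show g ^ (B * orderOf g) = 1 by
                rw [show B * orderOf g = orderOf g * B from mul_comm _ _, pow_mul,
                  pow_orderOf_eq_one, one_pow]]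
              simp
            exact (hU3 _ huU _ hu'U ⟨_, hm⟩).symm
          rw [hfint _ hgwFL hgwi (g x) hgx, hfint _ hwFL hi x hxd, hre]
          have heq : (g ^ Nc (g (fla T x))) (Vc (fla T x))
              = (g ^ (Nc (fla T x) + 1)) (Vc (fla T x)) := by
            have h5 := hb
            rw [hre] at h5
            exact h5
          have hy : g x ∈ T.Desc ((g ^ Nc (g (fla T x))) (Vc (fla T x))) := by
            rw [← hre, hgn']
            exact hgx
          rw [hC _ huU _ _ heq (g x) hy]
          have e1 : (g ^ (Nc (fla T x) + 1))⁻¹ (g x) = (g ^ Nc (fla T x))⁻¹ x := by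
            rw [pow_succ', mul_inv_rev, Equiv.Perm.mul_apply, Equiv.Perm.inv_apply_self]
          rw [e1, pow_succ', Equiv.Perm.mul_apply]
        · have hxw : x = fla T x := desc_leaf hwFL hi hxd
          have hgwl : ¬ T.Internal (g (fla T x)) := by
            intro h
            have := aut_internal (inv_mem hg) h
            rw [Equiv.Perm.inv_apply_self] at this
            exact hi this
          rw [hfleaf _ hgwFL hgwl (g x) hgx, hfleaf _ hwFL hi x hxd]
          exact (hs2 x (hxw ▸ hwFL)).symm
    refine ⟨t, htAut, ?_⟩
    ext x
    simp only [Equiv.Perm.mul_apply]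
    calc t (g (t⁻¹ x)) = f (g (t⁻¹ x)) := ht_apply _
      _ = g' (f (t⁻¹ x)) := hcomm _
      _ = g' (t (t⁻¹ x)) := by rw [ht_apply]
      _ = g' x := by rw [Equiv.Perm.apply_inv_self]
end

section
/- Two automorphisms g, g' ∈ Aut(T) are conjugate in Aut(T) if and only if the tree compositions φ^g ∈ C(T,P^g) and φ^{g'} ∈ C(T,P^{g'}) are equivalent. -/
open Function

open FRTree

section ConjugacyAux

open Function

namespace CCaux

variable {T : FRTree}

theorem aut_root {a : Equiv.Perm T.V} (ha : a ∈ T.Aut) : a T.root = T.root := ha.1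

theorem aut_parent {a : Equiv.Perm T.V} (ha : a ∈ T.Aut) (v : T.V) :
    T.parent (a v) = a (T.parent v) := by
  by_cases h : v = T.root
  · subst h; simp [ha.1, T.parent_root]
  · exact (ha.2 v h).2

theorem aut_parent_iter {a : Equiv.Perm T.V} (ha : a ∈ T.Aut) (n : ℕ) (v : T.V) :
    T.parent^[n] (a v) = a (T.parent^[n] v) := by
  induction n generalizing v with
  | zero => rfl
  | succ k ih =>
      rw [Function.iterate_succ_apply, Function.iterate_succ_apply, aut_parent ha, ih]

def lvl (T : FRTree) (v : T.V) : ℕ := Nat.find (T.reaches_root v)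

theorem lvl_spec (v : T.V) : T.parent^[lvl T v] v = T.root :=
  Nat.find_spec (T.reaches_root v)

theorem lvl_root : lvl T T.root = 0 :=
  Nat.le_zero.mp (Nat.find_le (show T.parent^[0] T.root = T.root from rfl))

theorem root_of_lvl_zero {v : T.V} (h : lvl T v = 0) : v = T.root := by
  have hs := lvl_spec (T := T) v
  rwa [h] at hs

theorem lvl_parent_lt {v : T.V} (h : v ≠ T.root) : lvl T (T.parent v) < lvl T v := by
  have h0 : lvl T v ≠ 0 := fun hh => h (root_of_lvl_zero hh)
  obtain ⟨k, hk⟩ := Nat.exists_eq_succ_of_ne_zero h0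
  have hs := lvl_spec (T := T) v
  rw [hk, Function.iterate_succ_apply] at hs
  have : lvl T (T.parent v) ≤ k := Nat.find_le hs
  omega

theorem lvl_aut_le {a : Equiv.Perm T.V} (ha : a ∈ T.Aut) (v : T.V) :
    lvl T (a v) ≤ lvl T v :=
  Nat.find_le (by rw [aut_parent_iter ha, lvl_spec, ha.1])

theorem lvl_aut {a : Equiv.Perm T.V} (ha : a ∈ T.Aut) (v : T.V) :
    lvl T (a v) = lvl T v := by
  refine le_antisymm (lvl_aut_le ha v) ?_
  have h := lvl_aut_le (inv_mem ha) (a v)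
  simpa using h

theorem pow_apply (g : Equiv.Perm T.V) (n : ℕ) (v : T.V) : (g ^ n) v = (⇑g)^[n] v := by
  induction n generalizing v with
  | zero => rfl
  | succ k ih =>
      rw [pow_succ, Equiv.Perm.mul_apply, Function.iterate_succ_apply, ih]

noncomputable def orb (g : Equiv.Perm T.V) (v : T.V) : Finset T.V :=
  (Finset.range (orderOf g)).image (fun n => (g ^ n) v)

theorem mem_orb {g : Equiv.Perm T.V} {v w : T.V} : w ∈ orb g v ↔ ∃ n : ℕ, (g ^ n) v = w := by
  constructor
  · intro h
    simp only [orb, Finset.mem_image, Finset.mem_range] at h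
    obtain ⟨n, _, hn⟩ := h
    exact ⟨n, hn⟩
  · rintro ⟨n, hn⟩
    simp only [orb, Finset.mem_image, Finset.mem_range]
    exact ⟨n % orderOf g, Nat.mod_lt _ (orderOf_pos g), by rw [pow_mod_orderOf]; exact hn⟩

theorem self_mem_orb (g : Equiv.Perm T.V) (v : T.V) : v ∈ orb g v :=
  mem_orb.mpr ⟨0, by simp⟩

theorem orb_symm {g : Equiv.Perm T.V} {v w : T.V} (h : ∃ n : ℕ, (g ^ n) v = w) :
    ∃ n : ℕ, (g ^ n) w = v := by
  obtain ⟨n, hn⟩ := h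
  refine ⟨n * orderOf g - n, ?_⟩
  have hle : n ≤ n * orderOf g := Nat.le_mul_of_pos_right n (orderOf_pos g)
  have h2 : (g ^ (n * orderOf g)) v = v := by
    rw [mul_comm, pow_mul, pow_orderOf_eq_one, one_pow, Equiv.Perm.one_apply]
  have h3 : (g ^ (n * orderOf g - n)) ((g ^ n) v) = (g ^ (n * orderOf g)) v := by
    rw [← Equiv.Perm.mul_apply, ← pow_add, Nat.sub_add_cancel hle]
  rw [← hn, h3, h2]

theorem orb_trans {g : Equiv.Perm T.V} {u v w : T.V}
    (h1 : ∃ n : ℕ, (g ^ n) u = v) (h2 : ∃ n : ℕ, (g ^ n) v = w) :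
    ∃ n : ℕ, (g ^ n) u = w := by
  obtain ⟨a, ha⟩ := h1; obtain ⟨b, hb⟩ := h2
  exact ⟨b + a, by rw [pow_add, Equiv.Perm.mul_apply, ha, hb]⟩

theorem orb_eq {g : Equiv.Perm T.V} {v w : T.V} (h : w ∈ orb g v) : orb g w = orb g v := by
  have h' := mem_orb.mp h
  ext x
  rw [mem_orb, mem_orb]
  exact ⟨fun hx => orb_trans h' hx, fun hx => orb_trans (orb_symm h') hx⟩

theorem mem_periodicPts (g : Equiv.Perm T.V) (v : T.V) : v ∈ Function.periodicPts ⇑g :=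
  Function.mk_mem_periodicPts (orderOf_pos g)
    (show (⇑g)^[orderOf g] v = v by rw [← pow_apply, pow_orderOf_eq_one]; rfl)

noncomputable def mper (g : Equiv.Perm T.V) (v : T.V) : ℕ := Function.minimalPeriod ⇑g v

theorem mper_pos (g : Equiv.Perm T.V) (v : T.V) : 0 < mper g v :=
  Function.minimalPeriod_pos_of_mem_periodicPts (mem_periodicPts g v)

theorem mper_dvd {g : Equiv.Perm T.V} {v : T.V} {n : ℕ} (h : (g ^ n) v = v) : mper g v ∣ n :=
  Function.IsPeriodicPt.minimalPeriod_dvd (show (⇑g)^[n] v = v by rw [← pow_apply]; exact h)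

theorem pow_eq_of_dvd {g : Equiv.Perm T.V} {v : T.V} {n : ℕ} (h : mper g v ∣ n) :
    (g ^ n) v = v := by
  rw [pow_apply]
  exact Function.isPeriodicPt_iff_minimalPeriod_dvd.mpr h

theorem mper_pow_apply (g : Equiv.Perm T.V) (n : ℕ) (v : T.V) :
    mper g ((g ^ n) v) = mper g v := by
  induction n with
  | zero => simp
  | succ k ih =>
      have h1 : (g ^ (k + 1)) v = g ((g ^ k) v) := by
        rw [pow_succ', Equiv.Perm.mul_apply]
      rw [h1]
      have h2 : mper g (g ((g ^ k) v)) = mper g ((g ^ k) v) :=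
        Function.minimalPeriod_apply (mem_periodicPts g _)
      rw [h2, ih]

theorem mper_eq_of_mem {g : Equiv.Perm T.V} {v w : T.V} (h : w ∈ orb g v) :
    mper g w = mper g v := by
  obtain ⟨n, hn⟩ := mem_orb.mp h
  rw [← hn, mper_pow_apply]

theorem sub_fix {g : Equiv.Perm T.V} {v : T.V} {a b : ℕ} (hab : b ≤ a)
    (h : (g ^ a) v = (g ^ b) v) : (g ^ (a - b)) v = v := by
  have h1 : (g ^ b) ((g ^ (a - b)) v) = (g ^ b) v := by
    rw [← Equiv.Perm.mul_apply, ← pow_add, Nat.add_sub_cancel' hab]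
    exact h
  exact (g ^ b).injective h1

theorem cancel_ge {g g' : Equiv.Perm T.V} {v x : T.V}
    (hp : mper g' x = mper g v) {a b : ℕ} (hab : b ≤ a) (h : (g ^ a) v = (g ^ b) v) :
    (g' ^ a) x = (g' ^ b) x := by
  have h1 : (g ^ (a - b)) v = v := sub_fix hab h
  have h2 : mper g v ∣ a - b := mper_dvd h1
  have h3 : (g' ^ (a - b)) x = x := pow_eq_of_dvd (by rw [hp]; exact h2)
  calc (g' ^ a) x = (g' ^ b) ((g' ^ (a - b)) x) := by
        rw [← Equiv.Perm.mul_apply, ← pow_add, Nat.add_sub_cancel' hab]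
    _ = (g' ^ b) x := by rw [h3]

theorem cancel {g g' : Equiv.Perm T.V} {v x : T.V}
    (hp : mper g' x = mper g v) {a b : ℕ} (h : (g ^ a) v = (g ^ b) v) :
    (g' ^ a) x = (g' ^ b) x := by
  rcases le_total b a with hab | hab
  · exact cancel_ge hp hab h
  · exact (cancel_ge hp hab h.symm).symm

theorem orb_eq_image_mper (g : Equiv.Perm T.V) (v : T.V) :
    orb g v = (Finset.range (mper g v)).image (fun n => (g ^ n) v) := by
  ext w
  rw [mem_orb]
  simp only [Finset.mem_image, Finset.mem_range]
  constructor
  · rintro ⟨n, hn⟩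
    refine ⟨n % mper g v, Nat.mod_lt _ (mper_pos g v), ?_⟩
    rw [← hn]
    have h1 : (g ^ (mper g v * (n / mper g v))) v = v := pow_eq_of_dvd (dvd_mul_right _ _)
    calc (g ^ (n % mper g v)) v
        = (g ^ (n % mper g v)) ((g ^ (mper g v * (n / mper g v))) v) := by rw [h1]
      _ = (g ^ (n % mper g v + mper g v * (n / mper g v))) v := by
          rw [pow_add, Equiv.Perm.mul_apply]
      _ = (g ^ n) v := by rw [Nat.mod_add_div]
  · rintro ⟨n, _, hn⟩
    exact ⟨n, hn⟩

theorem card_orb (g : Equiv.Perm T.V) (v : T.V) : (orb g v).card = mper g v := by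
  rw [orb_eq_image_mper, Finset.card_image_of_injOn, Finset.card_range]
  intro a ha b hb hab
  simp only [Finset.coe_range, Set.mem_Iio] at ha hb
  rcases le_total a b with h | h
  · have hd : mper g v ∣ b - a := mper_dvd (sub_fix h hab.symm)
    rcases Nat.eq_zero_or_pos (b - a) with h0 | h0
    · omega
    · have := Nat.le_of_dvd h0 hd
      omega
  · have hd : mper g v ∣ a - b := mper_dvd (sub_fix h hab)
    rcases Nat.eq_zero_or_pos (a - b) with h0 | h0
    · omega
    · have := Nat.le_of_dvd h0 hd
      omega

theorem mper_tau {g g' τ : Equiv.Perm T.V}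
    (horb : ∀ u v : T.V, (∃ n : ℕ, (g ^ n) u = v) ↔ ∃ n : ℕ, (g' ^ n) (τ u) = τ v)
    (u : T.V) : mper g' (τ u) = mper g u := by
  rw [← card_orb g u, ← card_orb g' (τ u)]
  have himg : (orb g u).image ⇑τ = orb g' (τ u) := by
    ext w
    simp only [Finset.mem_image]
    constructor
    · rintro ⟨x, hx, rfl⟩
      exact mem_orb.mpr ((horb u x).mp (mem_orb.mp hx))
    · intro hw
      refine ⟨τ.symm w, ?_, by simp⟩
      have h1 : ∃ n, (g' ^ n) (τ u) = τ (τ.symm w) := by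
        simpa using mem_orb.mp hw
      exact mem_orb.mpr ((horb u (τ.symm w)).mpr h1)
  rw [← himg, Finset.card_image_of_injective _ τ.injective]

theorem min'_congr {α : Type*} [LinearOrder α] {s t : Finset α} (h : s = t)
    (hs : s.Nonempty) (ht : t.Nonempty) : s.min' hs = t.min' ht := by
  subst h; rfl

theorem exists_conj_fun (T : FRTree) (g g' τ : Equiv.Perm T.V)
    (hg : g ∈ T.Aut) (hg' : g' ∈ T.Aut) (hτ : τ ∈ T.Aut)
    (horb : ∀ u v : T.V, (∃ n : ℕ, (g ^ n) u = v) ↔ ∃ n : ℕ, (g' ^ n) (τ u) = τ v) :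
    ∀ N : ℕ, ∃ t : T.V → T.V, t T.root = T.root ∧
      ∀ v : T.V, lvl T v ≤ N →
        (∃ s : ℕ, (g' ^ s) (τ v) = t v) ∧
        T.parent (t v) = t (T.parent v) ∧
        t (g v) = g' (t v) := by
  intro N
  induction N with
  | zero =>
      refine ⟨id, rfl, fun v hv => ?_⟩
      have hv0 : v = T.root := root_of_lvl_zero (Nat.le_zero.mp hv)
      subst hv0
      refine ⟨⟨0, by simp [aut_root hτ]⟩, by simp [T.parent_root], ?_⟩
      simp [aut_root hg, aut_root hg']
  | succ n ih =>
      classical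
      obtain ⟨t, htroot, ht⟩ := ih
      have htpow : ∀ (j : ℕ) (w : T.V), lvl T w ≤ n → t ((g ^ j) w) = (g' ^ j) (t w) := by
        intro j
        induction j with
        | zero => intro w _; simp
        | succ k ihk =>
            intro w hw
            have h1 : (g ^ (k + 1)) w = (g ^ k) (g w) := by
              rw [pow_succ, Equiv.Perm.mul_apply]
            rw [h1, ihk (g w) (by rw [lvl_aut hg]; exact hw), (ht w hw).2.2,
              ← Equiv.Perm.mul_apply, ← pow_succ]
      letI : LinearOrder T.V :=
        LinearOrder.lift' (Fintype.equivFin T.V) (Fintype.equivFin T.V).injective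
      set rep : T.V → T.V := fun v => (orb g v).min' ⟨v, self_mem_orb g v⟩ with hrep
      have hrep_mem : ∀ v, rep v ∈ orb g v := fun v => Finset.min'_mem _ _
      have hrep_g : ∀ v, rep (g v) = rep v := by
        intro v
        have h1 : orb g (g v) = orb g v := orb_eq (mem_orb.mpr ⟨1, by simp⟩)
        simp only [hrep]
        exact min'_congr h1 _ _
      have hjex : ∀ v : T.V, ∃ j : ℕ, (g ^ j) (rep v) = v := by
        intro v
        apply mem_orb.mp
        rw [orb_eq (hrep_mem v)]
        exact self_mem_orb g v
      set jf : T.V → ℕ := fun v => Nat.find (hjex v) with hjf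
      have hjprop : ∀ v, (g ^ jf v) (rep v) = v := fun v => Nat.find_spec (hjex v)
      set sf : T.V → ℕ := fun w =>
        if h : ∃ s : ℕ, (g' ^ s) (τ w) = t w then Nat.find h else 0 with hsf
      have hsprop : ∀ w, (∃ s : ℕ, (g' ^ s) (τ w) = t w) → (g' ^ sf w) (τ w) = t w := by
        intro w h
        simp only [hsf, dif_pos h]
        exact Nat.find_spec h
      set t' : T.V → T.V := fun v => if lvl T v ≤ n then t v
        else (g' ^ (jf v + sf (T.parent (rep v)))) (τ (rep v)) with ht'
      have ht'_low : ∀ w, lvl T w ≤ n → t' w = t w := fun w hw => by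
        simp only [ht', if_pos hw]
      have ht'_high : ∀ w, ¬ lvl T w ≤ n →
          t' w = (g' ^ (jf w + sf (T.parent (rep w)))) (τ (rep w)) := fun w hw => by
        simp only [ht', if_neg hw]
      refine ⟨t', by rw [ht'_low _ (by rw [lvl_root]; omega)]; exact htroot, ?_⟩
      intro v hv
      by_cases hcase : lvl T v ≤ n
      · have hpv : lvl T (T.parent v) ≤ n := by
          by_cases hr : v = T.root
          · subst hr; rwa [T.parent_root]
          · have := lvl_parent_lt hr; omega
        have hgv : lvl T (g v) ≤ n := by rw [lvl_aut hg]; exact hcase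
        rw [ht'_low v hcase, ht'_low _ hpv, ht'_low _ hgv]
        exact ht v hcase
      · have hlv : lvl T v = n + 1 := by omega
        have hv0mem : rep v ∈ orb g v := hrep_mem v
        have hlv0 : lvl T (rep v) = n + 1 := by
          obtain ⟨m, hm⟩ := mem_orb.mp hv0mem
          rw [← hm, lvl_aut (pow_mem hg m), hlv]
        have hv0ne : rep v ≠ T.root := by
          intro h
          rw [h, lvl_root] at hlv0
          omega
        have hvne : v ≠ T.root := by
          intro h
          rw [h, lvl_root] at hlv
          omega
        have hpv0 : lvl T (T.parent (rep v)) ≤ n := by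
          have := lvl_parent_lt hv0ne; omega
        have hsx : ∃ s : ℕ, (g' ^ s) (τ (T.parent (rep v))) = t (T.parent (rep v)) :=
          (ht _ hpv0).1
        have hs := hsprop _ hsx
        have hj : (g ^ jf v) (rep v) = v := hjprop v
        refine ⟨?_, ?_, ?_⟩
        · -- C2
          obtain ⟨m, hm⟩ : ∃ m, (g ^ m) v = rep v := mem_orb.mp hv0mem
          obtain ⟨m', hm'⟩ := (horb v (rep v)).mp ⟨m, hm⟩
          refine ⟨jf v + sf (T.parent (rep v)) + m', ?_⟩
          rw [ht'_high v hcase, ← hm', pow_add, Equiv.Perm.mul_apply]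
        · -- C3
          have hparent_v : T.parent v = (g ^ jf v) (T.parent (rep v)) := by
            conv_lhs => rw [← hj]
            exact aut_parent (pow_mem hg (jf v)) (rep v)
          have hlpv : lvl T (T.parent v) ≤ n := by
            have := lvl_parent_lt hvne; omega
          rw [ht'_high v hcase, ht'_low _ hlpv,
            aut_parent (pow_mem hg' (jf v + sf (T.parent (rep v)))), aut_parent hτ,
            hparent_v, htpow (jf v) _ hpv0, ← hs, pow_add, Equiv.Perm.mul_apply]
        · -- C4
          have hgvhigh : ¬ lvl T (g v) ≤ n := by rw [lvl_aut hg]; exact hcase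
          rw [ht'_high _ hgvhigh, ht'_high v hcase, hrep_g v]
          have hj' : (g ^ jf (g v)) (rep v) = g v := by
            rw [← hrep_g v]
            exact hjprop (g v)
          have hj2 : (g ^ (jf v + 1)) (rep v) = g v := by
            rw [pow_succ', Equiv.Perm.mul_apply, hj]
          have hgpow : (g ^ (jf (g v) + sf (T.parent (rep v)))) (rep v)
              = (g ^ (jf v + sf (T.parent (rep v)) + 1)) (rep v) := by
            have e1 : jf (g v) + sf (T.parent (rep v)) = sf (T.parent (rep v)) + jf (g v) := by
              omega
            have e2 : jf v + sf (T.parent (rep v)) + 1 = sf (T.parent (rep v)) + (jf v + 1) := by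
              omega
            rw [e1, e2, pow_add, pow_add, Equiv.Perm.mul_apply, Equiv.Perm.mul_apply, hj', hj2]
          have hcan := cancel (g := g) (g' := g') (v := rep v) (x := τ (rep v))
            (mper_tau horb (rep v)) hgpow
          rw [hcan, pow_succ', Equiv.Perm.mul_apply]

end CCaux

end ConjugacyAux

/-- **Theorem.**  Two automorphisms `g, g'` of `T` are conjugate in `Aut T` if and only
if the associated orbit tree compositions `φ^g` and `φ^{g'}` are equivalent, i.e. there
is an automorphism `τ` of `T` matching the `⟨g⟩`-orbits with the `⟨g'⟩`-orbits. -/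
theorem conjugate_iff_orbit_compositions_equivalent
    (T : FRTree) (g g' : Equiv.Perm T.V) (hg : g ∈ T.Aut) (hg' : g' ∈ T.Aut) :
    (∃ t ∈ T.Aut, t * g * t⁻¹ = g') ↔
      ∃ τ ∈ T.Aut, ∀ u v : T.V,
        ((∃ n : ℕ, (g ^ n) u = v) ↔ ∃ n : ℕ, (g' ^ n) (τ u) = τ v) := by
  open CCaux in
  constructor
  · rintro ⟨t, htA, rfl⟩
    have hpow : ∀ (n : ℕ) (x : T.V), ((t * g * t⁻¹) ^ n) (t x) = t ((g ^ n) x) := by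
      intro n
      induction n with
      | zero => intro x; simp
      | succ k ihk =>
          intro x
          have h1 : (t * g * t⁻¹) (t x) = t (g x) := by
            simp [Equiv.Perm.mul_apply]
          have h2 : ((t * g * t⁻¹) ^ (k + 1)) (t x)
              = ((t * g * t⁻¹) ^ k) ((t * g * t⁻¹) (t x)) := by
            rw [pow_succ, Equiv.Perm.mul_apply]
          have h3 : (g ^ (k + 1)) x = (g ^ k) (g x) := by
            rw [pow_succ, Equiv.Perm.mul_apply]
          rw [h3, h2, h1, ihk (g x)]
    refine ⟨t, htA, fun u v => ⟨?_, ?_⟩⟩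
    · rintro ⟨n, rfl⟩
      exact ⟨n, hpow n u⟩
    · rintro ⟨n, hn⟩
      rw [hpow n u] at hn
      exact ⟨n, t.injective hn⟩
  · rintro ⟨τ, hτ, horb⟩
    obtain ⟨t, htroot, ht⟩ := exists_conj_fun T g g' τ hg hg' hτ horb (Finset.univ.sup (lvl T))
    have hall : ∀ v : T.V, lvl T v ≤ Finset.univ.sup (lvl T) := fun v =>
      Finset.le_sup (Finset.mem_univ v)
    have hC2 : ∀ v, ∃ s : ℕ, (g' ^ s) (τ v) = t v := fun v => (ht v (hall v)).1
    have hC3 : ∀ v, T.parent (t v) = t (T.parent v) := fun v => (ht v (hall v)).2.1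
    have hC4 : ∀ v, t (g v) = g' (t v) := fun v => (ht v (hall v)).2.2
    have htpow : ∀ (j : ℕ) (w : T.V), t ((g ^ j) w) = (g' ^ j) (t w) := by
      intro j
      induction j with
      | zero => intro w; simp
      | succ k ihk =>
          intro w
          have h1 : (g ^ (k + 1)) w = (g ^ k) (g w) := by
            rw [pow_succ, Equiv.Perm.mul_apply]
          rw [h1, ihk (g w), hC4 w, ← Equiv.Perm.mul_apply, ← pow_succ]
    have hinj : Function.Injective t := by
      intro u v huv
      obtain ⟨a, ha⟩ := hC2 u
      obtain ⟨b, hb⟩ := hC2 v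
      have hb' : (g' ^ b) (τ v) = t u := by rw [hb, huv]
      have h1 : ∃ k, (g' ^ k) (τ u) = τ v := orb_trans ⟨a, ha⟩ (orb_symm ⟨b, hb'⟩)
      obtain ⟨m, hm⟩ := (horb u v).mpr h1
      have h3 : (g' ^ m) (t u) = t u := by rw [← htpow m u, hm, huv]
      have hper : mper g' (t u) ∣ m := mper_dvd h3
      have hpe : mper g' (t u) = mper g u := by
        have e1 : mper g' (t u) = mper g' (τ u) := mper_eq_of_mem (mem_orb.mpr ⟨a, ha⟩)
        rw [e1, mper_tau horb u]
      have h4 : (g ^ m) u = u := pow_eq_of_dvd (by rw [← hpe]; exact hper)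
      rw [← hm, h4]
    have hbij : Function.Bijective t := Finite.injective_iff_bijective.mp hinj
    refine ⟨Equiv.ofBijective t hbij, ⟨htroot, fun v hv => ⟨?_, hC3 v⟩⟩, ?_⟩
    · show t v ≠ T.root
      intro h
      exact hv (hinj (h.trans htroot.symm))
    · ext x
      show t (g ((Equiv.ofBijective t hbij).symm x)) = g' x
      rw [hC4, show t ((Equiv.ofBijective t hbij).symm x) = x from
        (Equiv.ofBijective t hbij).apply_symm_apply x]
end
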